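/- Let d : ℕ → ℝ be strictly decreasing with d(t) > 0 for all t and lim_{t→∞} d(t) = 0, and suppose there is Θ ≥ 0 such that |1/(d(s)·d(t)) − 1/d(s+t)| ≤ Θ for all s, t ∈ ℕ. Then there exists γ ∈ (0,1) such that d(t) = γ^t for every t ∈ ℕ. -/
import Mathlib


/-- Theorem `thm:exp2`: a strictly decreasing, positive discount factor
vanishing at infinity whose reciprocal `f = 1/d` satisfies the approximate
multiplicative Cauchy equation `|f(s)f(t) - f(s+t)| ≤ Θ` is exactly exponential:
`d t = γ^t` for some `γ ∈ (0,1)`. -/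
theorem stmt_18 (d : ℕ → ℝ) (hpos : ∀ t, 0 < d t) (hanti : StrictAnti d)
    (hlim : Filter.Tendsto d Filter.atTop (nhds 0))
    (Θ : ℝ) (hΘ : 0 ≤ Θ)
    (h : ∀ s t : ℕ, |1 / (d s * d t) - 1 / d (s + t)| ≤ Θ) :
    ∃ γ : ℝ, 0 < γ ∧ γ < 1 ∧ ∀ t : ℕ, d t = γ ^ t := by
  set f : ℕ → ℝ := fun t => 1 / d t with hf
  have hfpos : ∀ t, 0 < f t := fun t => one_div_pos.mpr (hpos t)
  have hne : ∀ t, d t ≠ 0 := fun t => (hpos t).ne'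
  have h' : ∀ s t : ℕ, |f s * f t - f (s + t)| ≤ Θ := by
    intro s t
    have := h s t
    rwa [show (1:ℝ) / (d s * d t) = f s * f t by
      simp [hf, div_mul_div_comm, mul_comm]] at this
  -- exact multiplicativity
  have hmul : ∀ s t : ℕ, f (s + t) = f s * f t := by
    intro s t
    by_contra hne'
    set a := |f s * f t - f (s + t)| with ha
    have ha0 : 0 < a := by
      rw [ha, abs_pos]
      intro hz
      exact hne' (by linarith [sub_eq_zero.mp hz])
    have key : ∀ u, a * f u ≤ Θ * (2 + f s) := by
      intro u
      have h1 : |f (s + t) * f u - f (s + t + u)| ≤ Θ := h' (s + t) u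
      have h2 : |f s * f (t + u) - f (s + (t + u))| ≤ Θ := h' s (t + u)
      have h3 : |f t * f u - f (t + u)| ≤ Θ := h' t u
      have h3' : |f s * (f t * f u) - f s * f (t + u)| ≤ f s * Θ := by
        rw [← mul_sub, abs_mul, abs_of_pos (hfpos s)]
        exact mul_le_mul_of_nonneg_left h3 (hfpos s).le
      have heq : (f s * f t - f (s + t)) * f u =
          (f s * (f t * f u) - f s * f (t + u)) +
          (f s * f (t + u) - f (s + (t + u))) -
          (f (s + t) * f u - f (s + t + u)) := by
        have : s + t + u = s + (t + u) := by ring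
        rw [this]; ring
      have : a * f u = |(f s * f t - f (s + t)) * f u| := by
        rw [abs_mul, abs_of_pos (hfpos u)]
      rw [this, heq]
      calc |(f s * (f t * f u) - f s * f (t + u)) +
          (f s * f (t + u) - f (s + (t + u))) -
          (f (s + t) * f u - f (s + t + u))|
          ≤ |(f s * (f t * f u) - f s * f (t + u)) +
          (f s * f (t + u) - f (s + (t + u)))| + |f (s + t) * f u - f (s + t + u)| :=
            abs_sub _ _
        _ ≤ (|f s * (f t * f u) - f s * f (t + u)| +
            |f s * f (t + u) - f (s + (t + u))|) + |f (s + t) * f u - f (s + t + u)| := by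
            gcongr; exact abs_add_le _ _
        _ ≤ (f s * Θ + Θ) + Θ := by gcongr
        _ = Θ * (2 + f s) := by ring
    -- unboundedness of f contradicts key
    have hB : 0 < Θ * (2 + f s) + 1 := by have := hfpos s; nlinarith
    have hε : 0 < a / (Θ * (2 + f s) + 1) := div_pos ha0 hB
    obtain ⟨u, hu⟩ := (Metric.tendsto_atTop.mp hlim (a / (Θ * (2 + f s) + 1)) hε) |>.imp
      fun u hu => hu u le_rfl
    rw [Real.dist_eq, sub_zero, abs_of_pos (hpos u)] at hu
    have h1 : (Θ * (2 + f s) + 1) * d u < a := by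
      have := (lt_div_iff₀ hB).mp hu; linarith [mul_comm (d u) (Θ * (2 + f s) + 1)]
    have hfu : (Θ * (2 + f s) + 1) < a * f u := by
      have h2 : (Θ * (2 + f s) + 1) < a / d u := (lt_div_iff₀ (hpos u)).mpr h1
      have : a * f u = a / d u := by rw [hf]; ring
      linarith [this ▸ h2]
    have := key u
    linarith
  have hdmul : ∀ s t : ℕ, d (s + t) = d s * d t := by
    intro s t
    have h2 : (d (s + t))⁻¹ = (d s * d t)⁻¹ := by
      have := hmul s t
      simp only [hf, one_div] at this
      rw [this, mul_inv]
    exact inv_injective h2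
  have hd0 : d 0 = 1 := by
    have := hdmul 0 0
    simp at this
    have h0 := hpos 0
    nlinarith
  refine ⟨d 1, hpos 1, by have := hanti (show (0:ℕ) < 1 by norm_num); linarith, ?_⟩
  intro t
  induction t with
  | zero => simpa using hd0
  | succ n ih => rw [show n + 1 = n + 1 from rfl, hdmul n 1, ih, pow_succ]
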